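/- arXiv:1609.00467 — 3 statements merged into one kernel-verified Lean document; each statement's English description precedes it below -/
import Mathlib

section
/- (Pointwise complexity of the PMM.) For every k ≥ 1: the inclusions 0 ∈ ∂g(v_j)+C*x_j and 0 ∈ ∂f(u_j)+M*y_j hold for all 1 ≤ j ≤ k, and there exists an index 1 ≤ i ≤ k such that ‖Mu_i+Cv_i−d‖ ≤ 2d_0/((1−ρ̄)τ√k) and ‖x_i−y_i‖ ≤ 2d_0/((1−ρ̄)τ√k), where τ = min{λ, 1/λ} and d_0 is the distance from (z_0,w_0) to the extended solution set S_e. -/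
open scoped RealInnerProductSpace

noncomputable section

/-- `w` is a subgradient of the extended-real-valued function `φ` at `x`. -/
def HasSubgrad {E : Type*} [NormedAddCommGroup E] [InnerProductSpace ℝ E]
    (φ : E → EReal) (w x : E) : Prop :=
  ∀ x' : E, φ x + ((⟪w, x' - x⟫ : ℝ) : EReal) ≤ φ x'

/-- `w` is an `ε`-subgradient of `φ` at `x`. -/
def HasESubgrad {E : Type*} [NormedAddCommGroup E] [InnerProductSpace ℝ E]
    (φ : E → EReal) (ε : ℝ) (w x : E) : Prop :=
  ∀ x' : E, φ x + ((⟪w, x' - x⟫ : ℝ) : EReal) - (ε : EReal) ≤ φ x'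

/-- Convexity for an extended-real-valued function. -/
def ConvexE {E : Type*} [NormedAddCommGroup E] [InnerProductSpace ℝ E]
    (φ : E → EReal) : Prop :=
  ∀ x y : E, ∀ a b : ℝ, 0 ≤ a → 0 ≤ b → a + b = 1 →
    φ (a • x + b • y) ≤ (a : EReal) * φ x + (b : EReal) * φ y

/-- Proper closed convex function with values in `(-∞, ∞]`. -/
def IsPCC {E : Type*} [NormedAddCommGroup E] [InnerProductSpace ℝ E]
    (φ : E → EReal) : Prop :=
  (∀ x, φ x ≠ ⊥) ∧ (∃ x, φ x ≠ ⊤) ∧ LowerSemicontinuous φ ∧ ConvexE φ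

/-- Fenchel conjugate. -/
def fconj {E : Type*} [NormedAddCommGroup E] [InnerProductSpace ℝ E]
    (φ : E → EReal) (w : E) : EReal :=
  ⨆ x : E, ((⟪w, x⟫ : ℝ) : EReal) - φ x

/-- Lagrangian of `min { f u + g v : M u + C v = d }`. -/
def Lag {E₁ E₂ F : Type*} [NormedAddCommGroup E₁] [InnerProductSpace ℝ E₁]
    [NormedAddCommGroup E₂] [InnerProductSpace ℝ E₂]
    [NormedAddCommGroup F] [InnerProductSpace ℝ F]
    (f : E₁ → EReal) (g : E₂ → EReal) (M : E₁ →ₗ[ℝ] F) (C : E₂ →ₗ[ℝ] F) (d : F)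
    (u : E₁) (v : E₂) (z : F) : EReal :=
  f u + g v + ((⟪M u + C v - d, z⟫ : ℝ) : EReal)

/-- Saddle point of the Lagrangian. -/
def IsSaddle {E₁ E₂ F : Type*} [NormedAddCommGroup E₁] [InnerProductSpace ℝ E₁]
    [NormedAddCommGroup E₂] [InnerProductSpace ℝ E₂]
    [NormedAddCommGroup F] [InnerProductSpace ℝ F]
    (f : E₁ → EReal) (g : E₂ → EReal) (M : E₁ →ₗ[ℝ] F) (C : E₂ →ₗ[ℝ] F) (d : F)
    (us : E₁) (vs : E₂) (zs : F) : Prop :=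
  Lag f g M C d us vs zs ≠ ⊤ ∧ Lag f g M C d us vs zs ≠ ⊥ ∧
  (∀ u v, Lag f g M C d us vs zs ≤ Lag f g M C d u v zs) ∧
  (∀ ζ, Lag f g M C d us vs ζ ≤ Lag f g M C d us vs zs)

/-- `h₁(z) = f*(-M* z)`. -/
def hOne {E₁ F : Type*} [NormedAddCommGroup E₁] [InnerProductSpace ℝ E₁]
    [FiniteDimensional ℝ E₁] [NormedAddCommGroup F] [InnerProductSpace ℝ F]
    [FiniteDimensional ℝ F] (f : E₁ → EReal) (M : E₁ →ₗ[ℝ] F) (z : F) : EReal :=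
  fconj f (-(LinearMap.adjoint M z))

/-- `h₂(z) = g*(-C* z) + ⟪d, z⟫`. -/
def hTwo {E₂ F : Type*} [NormedAddCommGroup E₂] [InnerProductSpace ℝ E₂]
    [FiniteDimensional ℝ E₂] [NormedAddCommGroup F] [InnerProductSpace ℝ F]
    [FiniteDimensional ℝ F] (g : E₂ → EReal) (C : E₂ →ₗ[ℝ] F) (d : F) (z : F) : EReal :=
  fconj g (-(LinearMap.adjoint C z)) + ((⟪d, z⟫ : ℝ) : EReal)

/-- The extended solution set `S_e(∂h₁, ∂h₂)`. -/
def extSolSet {E₁ E₂ F : Type*} [NormedAddCommGroup E₁] [InnerProductSpace ℝ E₁]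
    [FiniteDimensional ℝ E₁] [NormedAddCommGroup E₂] [InnerProductSpace ℝ E₂]
    [FiniteDimensional ℝ E₂] [NormedAddCommGroup F] [InnerProductSpace ℝ F]
    [FiniteDimensional ℝ F]
    (f : E₁ → EReal) (g : E₂ → EReal) (M : E₁ →ₗ[ℝ] F) (C : E₂ →ₗ[ℝ] F) (d : F) :
    Set (F × F) :=
  {p | HasSubgrad (hOne f M) (-p.2) p.1 ∧ HasSubgrad (hTwo g C d) p.2 p.1}

-- ==================== auxiliary lemmas ====================

lemma add_coe_top' {x : EReal} {r : ℝ} (h : x + (r : EReal) = ⊤) : x = ⊤ := by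
  induction x using EReal.rec with
  | bot => simp at h
  | coe a => rw [← EReal.coe_add] at h; exact absurd h (EReal.coe_ne_top _)
  | top => rfl

lemma ne_top_of_add_coe_le {x y : EReal} {r s t : ℝ} (hy : y = (s : EReal))
    (h : x + (r : EReal) ≤ y + (t : EReal)) : x ≠ ⊤ := by
  intro hx
  rw [hx, EReal.top_add_coe, hy, ← EReal.coe_add, top_le_iff] at h
  exact absurd h (EReal.coe_ne_top _)

lemma ne_top_of_add_coe_le' {x y : EReal} {r s : ℝ} (hy : y = (s : EReal))
    (h : x + (r : EReal) ≤ y) : x ≠ ⊤ := by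
  intro hx
  rw [hx, EReal.top_add_coe, hy, top_le_iff] at h
  exact absurd h (EReal.coe_ne_top _)

lemma fconj_ge {E : Type*} [NormedAddCommGroup E] [InnerProductSpace ℝ E]
    (φ : E → EReal) (ξ v : E) (r : ℝ) (hv : φ v = (r : EReal)) :
    ((⟪ξ, v⟫ - r : ℝ) : EReal) ≤ fconj φ ξ := by
  have h := le_iSup (fun x : E => ((⟪ξ, x⟫ : ℝ) : EReal) - φ x) v
  rwa [hv, ← EReal.coe_sub] at h

lemma fconj_eq_of_subgrad {E : Type*} [NormedAddCommGroup E] [InnerProductSpace ℝ E]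
    (φ : E → EReal) (hbot : ∀ x, φ x ≠ ⊥) (ξ v : E) (r : ℝ) (hv : φ v = (r : EReal))
    (hsub : HasSubgrad φ ξ v) : fconj φ ξ = ((⟪ξ, v⟫ - r : ℝ) : EReal) := by
  refine le_antisymm (iSup_le fun x => ?_) (fconj_ge φ ξ v r hv)
  by_cases hx : φ x = ⊤
  · rw [hx]; simp
  · obtain ⟨s, hs⟩ : ∃ s : ℝ, φ x = (s : EReal) := ⟨(φ x).toReal, (EReal.coe_toReal hx (hbot x)).symm⟩
    have h := hsub x
    rw [hv, hs, ← EReal.coe_add, EReal.coe_le_coe_iff] at h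
    rw [hs, ← EReal.coe_sub, EReal.coe_le_coe_iff]
    have e : ⟪ξ, x - v⟫ = ⟪ξ, x⟫ - ⟪ξ, v⟫ := inner_sub_right _ _ _
    linarith [h, e.le, e.ge]

lemma subgrad_mono {F : Type*} [NormedAddCommGroup F] [InnerProductSpace ℝ F]
    (φ : F → EReal) (w1 x1 w2 x2 : F) (r1 r2 : ℝ)
    (h1 : φ x1 = (r1 : EReal)) (h2 : φ x2 = (r2 : EReal))
    (s1 : HasSubgrad φ w1 x1) (s2 : HasSubgrad φ w2 x2) :
    0 ≤ ⟪w1 - w2, x1 - x2⟫ := by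
  have a1 := s1 x2
  have a2 := s2 x1
  rw [h1, h2, ← EReal.coe_add, EReal.coe_le_coe_iff] at a1
  rw [h1, h2, ← EReal.coe_add, EReal.coe_le_coe_iff] at a2
  have e1 : ⟪w1 - w2, x1 - x2⟫ = ⟪w1, x1 - x2⟫ - ⟪w2, x1 - x2⟫ := inner_sub_left _ _ _
  have e2 : ⟪w1, x2 - x1⟫ = -⟪w1, x1 - x2⟫ := by
    rw [← inner_neg_right]; congr 1; abel
  linarith [e1.le, e1.ge, e2.le, e2.ge]

section Transfer

variable {E F : Type*} [NormedAddCommGroup E] [InnerProductSpace ℝ E]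
  [NormedAddCommGroup F] [InnerProductSpace ℝ F]
  [FiniteDimensional ℝ E] [FiniteDimensional ℝ F]

lemma adj_inner (C : E →ₗ[ℝ] F) (x : F) (v : E) :
    ⟪-(LinearMap.adjoint C x), v⟫ = -⟪x, C v⟫ := by
  rw [inner_neg_left, LinearMap.adjoint_inner_left]

lemma hTwo_val (g : E → EReal) (hbot : ∀ x, g x ≠ ⊥) (C : E →ₗ[ℝ] F) (d : F)
    (x : F) (v : E) (r : ℝ) (hvr : g v = (r : EReal))
    (hsub : HasSubgrad g (-(LinearMap.adjoint C x)) v) :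
    hTwo g C d x = ((-⟪x, C v⟫ - r + ⟪d, x⟫ : ℝ) : EReal) := by
  rw [hTwo, fconj_eq_of_subgrad g hbot _ v r hvr hsub, adj_inner, ← EReal.coe_add]

lemma hTwo_subgrad (g : E → EReal) (hbot : ∀ x, g x ≠ ⊥) (C : E →ₗ[ℝ] F) (d : F)
    (x : F) (v : E) (r : ℝ) (hvr : g v = (r : EReal))
    (hsub : HasSubgrad g (-(LinearMap.adjoint C x)) v) :
    HasSubgrad (hTwo g C d) (d - C v) x := by
  intro z'
  rw [hTwo_val g hbot C d x v r hvr hsub, ← EReal.coe_add]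
  have hge : ((-⟪z', C v⟫ - r + ⟪d, z'⟫ : ℝ) : EReal) ≤ hTwo g C d z' := by
    have h := fconj_ge g (-(LinearMap.adjoint C z')) v r hvr
    rw [adj_inner] at h
    calc ((-⟪z', C v⟫ - r + ⟪d, z'⟫ : ℝ) : EReal)
        = ((-⟪z', C v⟫ - r : ℝ) : EReal) + ((⟪d, z'⟫ : ℝ) : EReal) := by
          rw [← EReal.coe_add]
      _ ≤ hTwo g C d z' := add_le_add h le_rfl
  refine le_trans (le_of_eq ?_) hge
  rw [EReal.coe_eq_coe_iff]
  have e1 : ⟪d - C v, z' - x⟫ = ⟪d, z'⟫ - ⟪d, x⟫ - ⟪C v, z'⟫ + ⟪C v, x⟫ := by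
    simp [inner_sub_left, inner_sub_right]; ring
  have e2 : ⟪x, C v⟫ = ⟪C v, x⟫ := real_inner_comm _ _
  have e3 : ⟪z', C v⟫ = ⟪C v, z'⟫ := real_inner_comm _ _
  linarith [e1]

lemma hTwo_ne_bot (g : E → EReal) (C : E →ₗ[ℝ] F) (d : F) (v0 : E) (r0 : ℝ)
    (hv0 : g v0 = (r0 : EReal)) (zq : F) : hTwo g C d zq ≠ ⊥ := by
  intro h
  rw [hTwo] at h
  rcases EReal.add_eq_bot_iff.mp h with h' | h'
  · have := fconj_ge g (-(LinearMap.adjoint C zq)) v0 r0 hv0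
    rw [h'] at this
    exact absurd (le_bot_iff.mp this) (EReal.coe_ne_bot _)
  · exact absurd h' (EReal.coe_ne_bot _)

lemma hOne_val (f : E → EReal) (hbot : ∀ x, f x ≠ ⊥) (M : E →ₗ[ℝ] F)
    (y : F) (u : E) (r : ℝ) (hur : f u = (r : EReal))
    (hsub : HasSubgrad f (-(LinearMap.adjoint M y)) u) :
    hOne f M y = ((-⟪y, M u⟫ - r : ℝ) : EReal) := by
  rw [hOne, fconj_eq_of_subgrad f hbot _ u r hur hsub, adj_inner]

lemma hOne_subgrad (f : E → EReal) (hbot : ∀ x, f x ≠ ⊥) (M : E →ₗ[ℝ] F)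
    (y : F) (u : E) (r : ℝ) (hur : f u = (r : EReal))
    (hsub : HasSubgrad f (-(LinearMap.adjoint M y)) u) :
    HasSubgrad (hOne f M) (-(M u)) y := by
  intro z'
  rw [hOne_val f hbot M y u r hur hsub, ← EReal.coe_add]
  have hge := fconj_ge f (-(LinearMap.adjoint M z')) u r hur
  rw [adj_inner] at hge
  refine le_trans (le_of_eq ?_) hge
  rw [EReal.coe_eq_coe_iff]
  have e1 : ⟪-(M u), z' - y⟫ = -⟪M u, z'⟫ + ⟪M u, y⟫ := by
    simp [inner_neg_left, inner_sub_right]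
  have e2 : ⟪y, M u⟫ = ⟪M u, y⟫ := real_inner_comm _ _
  have e3 : ⟪z', M u⟫ = ⟪M u, z'⟫ := real_inner_comm _ _
  linarith

lemma hOne_ne_bot (f : E → EReal) (M : E →ₗ[ℝ] F) (u0 : E) (r0 : ℝ)
    (hu0 : f u0 = (r0 : EReal)) (zq : F) : hOne f M zq ≠ ⊥ := by
  intro h
  rw [hOne] at h
  have := fconj_ge f (-(LinearMap.adjoint M zq)) u0 r0 hu0
  rw [h] at this
  exact absurd (le_bot_iff.mp this) (EReal.coe_ne_bot _)

lemma le_of_forall_small (c s K : ℝ) (hK : 0 ≤ K)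
    (h : ∀ t : ℝ, 0 < t → t ≤ 1 → c ≤ s + t * K) : c ≤ s := by
  by_contra hcs
  push_neg at hcs
  set δ := c - s with hδ
  have hδpos : 0 < δ := by simp [hδ]; linarith
  have ht := h (min 1 (δ / (2 * (K + 1)))) (by positivity) (min_le_left _ _)
  have h2 : min 1 (δ / (2 * (K + 1))) ≤ δ / (2 * (K + 1)) := min_le_right _ _
  have h3 : min 1 (δ / (2 * (K + 1))) * K ≤ δ / (2 * (K + 1)) * K :=
    mul_le_mul_of_nonneg_right h2 hK
  have h4 : δ / (2 * (K + 1)) * K < δ := by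
    rw [div_mul_eq_mul_div, div_lt_iff₀ (by positivity)]
    nlinarith
  linarith

lemma opt_subgrad (g : E → EReal) (hbot : ∀ x, g x ≠ ⊥) (hproper : ∃ x, g x ≠ ⊤)
    (hconv : ConvexE g)
    (C : E →ₗ[ℝ] F) (d a : F) (lam : ℝ) (hlam : 0 < lam) (vk : E)
    (hopt : ∀ v' : E, g vk + ((⟪a, C vk - d⟫ + lam / 2 * ‖C vk - d‖ ^ 2 : ℝ) : EReal) ≤
        g v' + ((⟪a, C v' - d⟫ + lam / 2 * ‖C v' - d‖ ^ 2 : ℝ) : EReal)) :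
    (∃ r : ℝ, g vk = (r : EReal)) ∧
      HasSubgrad g (-(LinearMap.adjoint C (a + lam • (C vk - d)))) vk := by
  obtain ⟨v0, hv0⟩ := hproper
  obtain ⟨s0, hs0⟩ : ∃ s : ℝ, g v0 = (s : EReal) :=
    ⟨(g v0).toReal, (EReal.coe_toReal hv0 (hbot v0)).symm⟩
  have hktop : g vk ≠ ⊤ := ne_top_of_add_coe_le hs0 (hopt v0)
  obtain ⟨r, hr⟩ : ∃ r : ℝ, g vk = (r : EReal) :=
    ⟨(g vk).toReal, (EReal.coe_toReal hktop (hbot vk)).symm⟩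
  refine ⟨⟨r, hr⟩, fun v' => ?_⟩
  by_cases hv' : g v' = ⊤
  · rw [hv']; exact le_top
  obtain ⟨s, hs⟩ : ∃ s : ℝ, g v' = (s : EReal) :=
    ⟨(g v').toReal, (EReal.coe_toReal hv' (hbot v')).symm⟩
  rw [hr, hs, ← EReal.coe_add, EReal.coe_le_coe_iff]
  set A := C vk - d with hA
  set B := C v' - d with hB
  set x := a + lam • A with hx
  have hadj : ⟪-(LinearMap.adjoint C x), v' - vk⟫ = -⟪x, B - A⟫ := by
    rw [inner_neg_left, LinearMap.adjoint_inner_left, hA, hB, map_sub]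
    congr 2
    abel
  rw [hadj]
  have key : ∀ t : ℝ, 0 < t → t ≤ 1 → r + -⟪x, B - A⟫ ≤ s + t * (lam / 2 * ‖B - A‖ ^ 2) := by
    intro t ht0 ht1
    set vt := (1 - t) • vk + t • v' with hvt
    have hconvt := hconv vk v' (1 - t) t (by linarith) (le_of_lt ht0) (by ring)
    rw [hr, hs, ← EReal.coe_mul, ← EReal.coe_mul, ← EReal.coe_add] at hconvt
    have hopt_t := hopt vt
    have hCvt : C vt - d = A + t • (B - A) := by
      rw [hvt, map_add, map_smul, map_smul, hA, hB]
      module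
    have hchain : g vk + ((⟪a, A⟫ + lam / 2 * ‖A‖ ^ 2 : ℝ) : EReal) ≤
        (((1 - t) * r + t * s : ℝ) : EReal) +
          ((⟪a, C vt - d⟫ + lam / 2 * ‖C vt - d‖ ^ 2 : ℝ) : EReal) :=
      le_trans hopt_t (add_le_add hconvt le_rfl)
    rw [hr, ← EReal.coe_add, ← EReal.coe_add, EReal.coe_le_coe_iff, hCvt] at hchain
    have hnorm : ‖A + t • (B - A)‖ ^ 2 =
        ‖A‖ ^ 2 + 2 * (t * ⟪A, B - A⟫) + t ^ 2 * ‖B - A‖ ^ 2 := by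
      rw [norm_add_sq_real, real_inner_smul_right, norm_smul, mul_pow,
        Real.norm_eq_abs, sq_abs]
    have hinner : ⟪a, A + t • (B - A)⟫ = ⟪a, A⟫ + t * ⟪a, B - A⟫ := by
      rw [inner_add_right, real_inner_smul_right]
    rw [hnorm, hinner] at hchain
    have hxin : ⟪x, B - A⟫ = ⟪a, B - A⟫ + lam * ⟪A, B - A⟫ := by
      rw [hx, inner_add_left, real_inner_smul_left]
    nlinarith [hchain, mul_pos ht0 ht0]
  have hK : 0 ≤ lam / 2 * ‖B - A‖ ^ 2 := by positivity
  linarith [le_of_forall_small (r + -⟪x, B - A⟫) s (lam / 2 * ‖B - A‖ ^ 2) hK key]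

end Transfer


set_option maxHeartbeats 1600000 in
lemma fejer_step {F : Type*} [NormedAddCommGroup F] [InnerProductSpace ℝ F]
    (zz ww mm cc dd p1 p2 : F) (lam τ ρb R gam : ℝ)
    (hlam : 0 < lam) (hτpos : 0 < τ) (hτlam : τ ≤ lam) (hτlam2 : τ * lam ≤ 1)
    (hρb0 : 0 ≤ ρb) (hρb1 : ρb < 1) (hR : 1 - ρb ≤ R) (hR2 : R ≤ 1 + ρb)
    (hS : 0 < ‖mm + cc - dd‖^2 + lam^2 * ‖ww - mm‖^2)
    (hgam : gam = (lam * ‖cc - dd + ww‖^2 + lam * ⟪dd - cc - mm, ww - mm⟫) /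
      (‖mm + cc - dd‖^2 + lam^2 * ‖mm - ww‖^2))
    (hm1 : 0 ≤ ⟪(dd - cc) - p2, (zz + lam • ww + lam • (cc - dd)) - p1⟫)
    (hm2 : 0 ≤ ⟪(-mm) - (-p2), (zz + lam • ww + lam • (cc - dd) - lam • (ww - mm)) - p1⟫) :
    ‖(zz + (R*gam) • (mm + cc - dd)) - p1‖^2 + ‖(ww - (R*gam*lam) • (ww - mm)) - p2‖^2 +
      (1-ρb)^2 * (τ/2)^2 * (‖mm + cc - dd‖^2 + lam^2 * ‖ww - mm‖^2) ≤
    ‖zz - p1‖^2 + ‖ww - p2‖^2 := by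
  have hnrev : ‖mm - ww‖ = ‖ww - mm‖ := norm_sub_rev _ _
  set a : F := mm + cc - dd with ha
  set b : F := ww - mm with hb
  set S : ℝ := ‖a‖^2 + lam^2 * ‖b‖^2 with hSdef
  set N : ℝ := lam * (‖a‖^2 + ‖b‖^2 + ⟪a, b⟫) with hN
  -- numerator identity
  have hnum : lam * ‖cc - dd + ww‖^2 + lam * ⟪dd - cc - mm, ww - mm⟫ = N := by
    have e1 : cc - dd + ww = a + b := by rw [ha, hb]; abel
    have e2 : dd - cc - mm = -a := by rw [ha]; abel
    rw [e1, e2, norm_add_sq_real, inner_neg_left, hN, hb]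
    ring
  have hgam' : gam = N / S := by rw [hgam, hnum, hnrev, ← hSdef]
  -- N lower bound
  have hNge : τ/2 * S ≤ N := by
    have hab := norm_add_sq_real a b
    rw [hN, hSdef]
    nlinarith [sq_nonneg ‖a + b‖, sq_nonneg ‖a‖, sq_nonneg ‖b‖,
      mul_nonneg (sub_nonneg.2 hτlam) (sq_nonneg ‖a‖),
      mul_nonneg (mul_nonneg (le_of_lt hlam) (sub_nonneg.2 hτlam2)) (sq_nonneg ‖b‖)]
  have hNnn : 0 ≤ N := le_trans (by positivity) hNge
  have hγnn : 0 ≤ gam := hgam' ▸ div_nonneg hNnn (le_of_lt hS)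
  have hRpos : 0 < R := lt_of_lt_of_le (by linarith) hR
  set t : ℝ := R * gam with htdef
  have htnn : 0 ≤ t := mul_nonneg (le_of_lt hRpos) hγnn
  -- expansions
  have e1 : ‖(zz + t • a) - p1‖^2 =
      ‖zz - p1‖^2 + 2*(t*⟪zz - p1, a⟫) + t^2*‖a‖^2 := by
    have : (zz + t • a) - p1 = (zz - p1) + t • a := by abel
    rw [this, norm_add_sq_real, real_inner_smul_right, norm_smul, mul_pow,
      Real.norm_eq_abs, sq_abs]
  have e2 : ‖(ww - (t*lam) • b) - p2‖^2 =
      ‖ww - p2‖^2 - 2*((t*lam)*⟪ww - p2, b⟫) + (t*lam)^2*‖b‖^2 := by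
    have : (ww - (t*lam) • b) - p2 = (ww - p2) - (t*lam) • b := by abel
    rw [this, norm_sub_sq_real, real_inner_smul_right, norm_smul, mul_pow,
      Real.norm_eq_abs, sq_abs]
  have hmul : R * gam * lam = t * lam := by rw [htdef]
  rw [hmul, e1, e2]
  -- the separation identity
  have hid : ⟪zz - p1, a⟫ - lam * ⟪ww - p2, b⟫ +
      (N + ⟪(dd - cc) - p2, (zz + lam • ww + lam • (cc - dd)) - p1⟫ +
        ⟪(-mm) - (-p2), (zz + lam • ww + lam • (cc - dd) - lam • (ww - mm)) - p1⟫) = 0 := by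
    rw [hN, ha, hb]
    simp only [inner_sub_left, inner_sub_right, inner_add_left, inner_add_right,
      inner_neg_left, inner_neg_right, real_inner_smul_left, real_inner_smul_right,
      ← real_inner_self_eq_norm_sq]
    ring_nf
    linarith [real_inner_comm zz mm, real_inner_comm p1 mm, real_inner_comm zz cc,
      real_inner_comm p1 cc, real_inner_comm zz dd, real_inner_comm p1 dd]
  -- quadratic decrease
  have hexp : t^2 * S - 2*t*N = -(R*(2-R)*(N^2/S)) := by
    rw [htdef, hgam']
    field_simp
    ring
  have hkey2 : (1-ρb)^2 * (τ/2)^2 * S ≤ R*(2-R)*(N^2/S) := by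
    have hRR : (1-ρb)^2 ≤ R*(2-R) := by
      nlinarith [sq_nonneg (R-1), mul_nonneg hρb0 (sub_nonneg.2 (le_of_lt hρb1))]
    have hN2 : (τ/2*S)^2 ≤ N^2 := pow_le_pow_left₀ (by positivity) hNge 2
    rw [← mul_div_assoc, le_div_iff₀ hS]
    calc (1-ρb)^2 * (τ/2)^2 * S * S = (1-ρb)^2 * ((τ/2*S)^2) := by ring
      _ ≤ (1-ρb)^2 * N^2 := mul_le_mul_of_nonneg_left hN2 (sq_nonneg _)
      _ ≤ R*(2-R) * N^2 := mul_le_mul_of_nonneg_right hRR (sq_nonneg N)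
  have hid2 : 2*t*⟪zz - p1, a⟫ - 2*(t*lam)*⟪ww - p2, b⟫ =
      -(2*t*(N + ⟪(dd - cc) - p2, (zz + lam • ww + lam • (cc - dd)) - p1⟫ +
        ⟪(-mm) - (-p2), (zz + lam • ww + lam • (cc - dd) - lam • (ww - mm)) - p1⟫)) := by
    linear_combination (2*t) * hid
  have hq : t^2*‖a‖^2 + (t*lam)^2*‖b‖^2 = t^2*S := by rw [hSdef]; ring
  have hmm' : 0 ≤ 2*t*(⟪(dd - cc) - p2, (zz + lam • ww + lam • (cc - dd)) - p1⟫ +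
      ⟪(-mm) - (-p2), (zz + lam • ww + lam • (cc - dd) - lam • (ww - mm)) - p1⟫) :=
    mul_nonneg (by linarith) (add_nonneg hm1 hm2)
  linarith [hid2, hq, hexp, hkey2, hmm']

section Saddle

variable {E₁ E₂ F : Type*} [NormedAddCommGroup E₁] [InnerProductSpace ℝ E₁]
  [NormedAddCommGroup E₂] [InnerProductSpace ℝ E₂]
  [NormedAddCommGroup F] [InnerProductSpace ℝ F]

lemma saddle_facts (f : E₁ → EReal) (g : E₂ → EReal)
    (hfbot : ∀ x, f x ≠ ⊥) (hgbot : ∀ x, g x ≠ ⊥)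
    (M : E₁ →ₗ[ℝ] F) (C : E₂ →ₗ[ℝ] F) (d : F) (us : E₁) (vs : E₂) (zs : F)
    (hsad : IsSaddle f g M C d us vs zs) :
    (∃ rf : ℝ, f us = (rf : EReal)) ∧ (∃ rg : ℝ, g vs = (rg : EReal)) ∧
    M us + C vs - d = 0 ∧
    (∀ u : E₁, f us + ((⟪zs, M us⟫ - ⟪zs, M u⟫ : ℝ) : EReal) ≤ f u) ∧
    (∀ v : E₂, g vs + ((⟪zs, C vs⟫ - ⟪zs, C v⟫ : ℝ) : EReal) ≤ g v) := by
  obtain ⟨htop, hbot, hmin, hmax⟩ := hsad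
  have hfus : f us ≠ ⊤ := by
    intro h
    apply htop
    rw [Lag, h, EReal.top_add_of_ne_bot (hgbot vs), EReal.top_add_coe]
  have hgvs : g vs ≠ ⊤ := by
    intro h
    apply htop
    rw [Lag, h, EReal.add_top_of_ne_bot (hfbot us), EReal.top_add_coe]
  obtain ⟨rf, hrf⟩ : ∃ rf : ℝ, f us = (rf : EReal) :=
    ⟨(f us).toReal, (EReal.coe_toReal hfus (hfbot us)).symm⟩
  obtain ⟨rg, hrg⟩ : ∃ rg : ℝ, g vs = (rg : EReal) :=
    ⟨(g vs).toReal, (EReal.coe_toReal hgvs (hgbot vs)).symm⟩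
  set e := M us + C vs - d with he
  have hfeas : e = 0 := by
    have h := hmax (zs + e)
    rw [Lag, Lag, hrf, hrg, ← he] at h
    have h' : rf + rg + ⟪e, zs + e⟫ ≤ rf + rg + ⟪e, zs⟫ := by exact_mod_cast h
    rw [inner_add_right] at h'
    have h2 : ⟪e, e⟫ ≤ 0 := by linarith
    have h3 : (0:ℝ) ≤ ⟪e, e⟫ := real_inner_self_nonneg
    exact inner_self_eq_zero.mp (le_antisymm h2 h3)
  refine ⟨⟨rf, hrf⟩, ⟨rg, hrg⟩, hfeas, fun u => ?_, fun v => ?_⟩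
  · by_cases hu : f u = ⊤
    · rw [hu]; exact le_top
    obtain ⟨ru, hru⟩ : ∃ ru : ℝ, f u = (ru : EReal) :=
      ⟨(f u).toReal, (EReal.coe_toReal hu (hfbot u)).symm⟩
    have h := hmin u vs
    rw [Lag, Lag, hrf, hrg, hru] at h
    have h' : rf + rg + ⟪M us + C vs - d, zs⟫ ≤ ru + rg + ⟪M u + C vs - d, zs⟫ := by
      exact_mod_cast h
    rw [hrf, hru]
    have goal' : rf + (⟪zs, M us⟫ - ⟪zs, M u⟫) ≤ ru →
        ((rf : EReal) + ((⟪zs, M us⟫ - ⟪zs, M u⟫ : ℝ) : EReal) ≤ (ru : EReal)) := by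
      intro hh; exact_mod_cast hh
    apply goal'
    have e1 : ⟪M us + C vs - d, zs⟫ = ⟪M us, zs⟫ + ⟪C vs, zs⟫ - ⟪d, zs⟫ := by
      simp [inner_add_left, inner_sub_left]
    have e2 : ⟪M u + C vs - d, zs⟫ = ⟪M u, zs⟫ + ⟪C vs, zs⟫ - ⟪d, zs⟫ := by
      simp [inner_add_left, inner_sub_left]
    have c1 : ⟪zs, M us⟫ = ⟪M us, zs⟫ := real_inner_comm _ _
    have c2 : ⟪zs, M u⟫ = ⟪M u, zs⟫ := real_inner_comm _ _
    linarith
  · by_cases hvv : g v = ⊤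
    · rw [hvv]; exact le_top
    obtain ⟨rv, hrv⟩ : ∃ rv : ℝ, g v = (rv : EReal) :=
      ⟨(g v).toReal, (EReal.coe_toReal hvv (hgbot v)).symm⟩
    have h := hmin us v
    rw [Lag, Lag, hrf, hrg, hrv] at h
    have h' : rf + rg + ⟪M us + C vs - d, zs⟫ ≤ rf + rv + ⟪M us + C v - d, zs⟫ := by
      exact_mod_cast h
    rw [hrg, hrv]
    have goal' : rg + (⟪zs, C vs⟫ - ⟪zs, C v⟫) ≤ rv →
        ((rg : EReal) + ((⟪zs, C vs⟫ - ⟪zs, C v⟫ : ℝ) : EReal) ≤ (rv : EReal)) := by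
      intro hh; exact_mod_cast hh
    apply goal'
    have e1 : ⟪M us + C vs - d, zs⟫ = ⟪M us, zs⟫ + ⟪C vs, zs⟫ - ⟪d, zs⟫ := by
      simp [inner_add_left, inner_sub_left]
    have e2 : ⟪M us + C v - d, zs⟫ = ⟪M us, zs⟫ + ⟪C v, zs⟫ - ⟪d, zs⟫ := by
      simp [inner_add_left, inner_sub_left]
    have c1 : ⟪zs, C vs⟫ = ⟪C vs, zs⟫ := real_inner_comm _ _
    have c2 : ⟪zs, C v⟫ = ⟪C v, zs⟫ := real_inner_comm _ _
    linarith

end Saddle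

set_option maxHeartbeats 2000000 in
/-- pointwise complexity of the PMM. -/
theorem pmm_pointwise_complexity
    (m1 m2 n : ℕ)
    (f : EuclideanSpace ℝ (Fin m1) → EReal) (g : EuclideanSpace ℝ (Fin m2) → EReal)
    (hf : IsPCC f) (hg : IsPCC g)
    (M : EuclideanSpace ℝ (Fin m1) →ₗ[ℝ] EuclideanSpace ℝ (Fin n))
    (C : EuclideanSpace ℝ (Fin m2) →ₗ[ℝ] EuclideanSpace ℝ (Fin n))
    (d : EuclideanSpace ℝ (Fin n))
    (lam : ℝ) (hlam : 0 < lam) (ρb : ℝ) (hρb : ρb ∈ Set.Ico (0 : ℝ) 1)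
    (u : ℕ → EuclideanSpace ℝ (Fin m1)) (v : ℕ → EuclideanSpace ℝ (Fin m2))
    (z w x y : ℕ → EuclideanSpace ℝ (Fin n)) (γ ρ : ℕ → ℝ)
    (hv : ∀ k, 1 ≤ k → ∀ v' : EuclideanSpace ℝ (Fin m2),
      g (v k) + ((⟪z (k-1) + lam • w (k-1), C (v k) - d⟫ +
          lam / 2 * ‖C (v k) - d‖ ^ 2 : ℝ) : EReal) ≤
        g v' + ((⟪z (k-1) + lam • w (k-1), C v' - d⟫ +
          lam / 2 * ‖C v' - d‖ ^ 2 : ℝ) : EReal))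
    (hu : ∀ k, 1 ≤ k → ∀ u' : EuclideanSpace ℝ (Fin m1),
      f (u k) + ((⟪z (k-1) + lam • (C (v k) - d), M (u k)⟫ +
          lam / 2 * ‖M (u k)‖ ^ 2 : ℝ) : EReal) ≤
        f u' + ((⟪z (k-1) + lam • (C (v k) - d), M u'⟫ +
          lam / 2 * ‖M u'‖ ^ 2 : ℝ) : EReal))
    (hx : ∀ k, 1 ≤ k → x k = z (k-1) + lam • w (k-1) + lam • (C (v k) - d))
    (hy : ∀ k, 1 ≤ k → y k = x k - lam • (w (k-1) - M (u k)))
    (hnz : ∀ k, 1 ≤ k → ‖M (u k) + C (v k) - d‖ + ‖M (u k) - w (k-1)‖ ≠ 0)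
    (hγ : ∀ k, 1 ≤ k → γ k = (lam * ‖C (v k) - d + w (k-1)‖ ^ 2 +
        lam * ⟪d - C (v k) - M (u k), w (k-1) - M (u k)⟫) /
      (‖M (u k) + C (v k) - d‖ ^ 2 + lam ^ 2 * ‖M (u k) - w (k-1)‖ ^ 2))
    (hρ : ∀ k, 1 ≤ k → ρ k ∈ Set.Icc (1 - ρb) (1 + ρb))
    (hz : ∀ k, 1 ≤ k → z k = z (k-1) + (ρ k * γ k) • (M (u k) + C (v k) - d))
    (hw : ∀ k, 1 ≤ k → w k = w (k-1) - (ρ k * γ k * lam) • (w (k-1) - M (u k)))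
    (hsaddle : ∃ us vs zs, IsSaddle f g M C d us vs zs)
    (hA2 : (intrinsicInterior ℝ {ξ : EuclideanSpace ℝ (Fin m1) | fconj f ξ < ⊤} ∩
      Set.range (LinearMap.adjoint M)).Nonempty)
    (hA3 : (intrinsicInterior ℝ {ξ : EuclideanSpace ℝ (Fin m2) | fconj g ξ < ⊤} ∩
      Set.range (LinearMap.adjoint C)).Nonempty)
    (d0 : ℝ)
    (hd0 : d0 = sInf ((fun p : EuclideanSpace ℝ (Fin n) × EuclideanSpace ℝ (Fin n) =>
      Real.sqrt (‖z 0 - p.1‖ ^ 2 + ‖w 0 - p.2‖ ^ 2)) '' extSolSet f g M C d))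
    (τ : ℝ) (hτ : τ = min lam (1 / lam))
    (k : ℕ) (hk : 1 ≤ k) :
    (∀ j, 1 ≤ j → j ≤ k →
      HasSubgrad g (-(LinearMap.adjoint C (x j))) (v j) ∧
      HasSubgrad f (-(LinearMap.adjoint M (y j))) (u j)) ∧
    ∃ i, 1 ≤ i ∧ i ≤ k ∧
      ‖M (u i) + C (v i) - d‖ ≤ 2 * d0 / ((1 - ρb) * τ * Real.sqrt k) ∧
      ‖x i - y i‖ ≤ 2 * d0 / ((1 - ρb) * τ * Real.sqrt k) := by
  -- basic positivity facts
  obtain ⟨hρb0, hρb1⟩ := hρb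
  have hτpos : 0 < τ := by rw [hτ]; exact lt_min hlam (by positivity)
  have hτlam : τ ≤ lam := hτ ▸ min_le_left _ _
  have hτlam2 : τ * lam ≤ 1 := by
    have h := hτ ▸ min_le_right lam (1 / lam)
    calc τ * lam ≤ (1 / lam) * lam := mul_le_mul_of_nonneg_right h (le_of_lt hlam)
      _ = 1 := by field_simp
  -- Step A : subgradient inclusions
  have hgsub : ∀ j, 1 ≤ j → (∃ r : ℝ, g (v j) = (r : EReal)) ∧
      HasSubgrad g (-(LinearMap.adjoint C (x j))) (v j) := by
    intro j hj
    have h := opt_subgrad g hg.1 hg.2.1 hg.2.2.2 C d (z (j-1) + lam • w (j-1)) lam hlam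
      (v j) (hv j hj)
    rwa [← hx j hj] at h
  have hfsub : ∀ j, 1 ≤ j → (∃ r : ℝ, f (u j) = (r : EReal)) ∧
      HasSubgrad f (-(LinearMap.adjoint M (y j))) (u j) := by
    intro j hj
    have h := opt_subgrad f hf.1 hf.2.1 hf.2.2.2 M (0 : EuclideanSpace ℝ (Fin n))
      (z (j-1) + lam • (C (v j) - d)) lam hlam (u j) ?_
    · have hyj : y j = z (j-1) + lam • (C (v j) - d) + lam • (M (u j) - 0) := by
        rw [hy j hj, hx j hj]
        module
      rwa [← hyj] at h
    · intro u'
      have h0 := hu j hj u'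
      simpa [sub_zero] using h0
  -- Step B : the extended solution set is nonempty
  obtain ⟨us, vs, zs, hsad⟩ := hsaddle
  obtain ⟨⟨rf, hrf⟩, ⟨rg, hrg⟩, hfeas, hfs, hgs⟩ :=
    saddle_facts f g hf.1 hg.1 M C d us vs zs hsad
  have hsubfs : HasSubgrad f (-(LinearMap.adjoint M zs)) us := by
    intro u'
    have e : ⟪-(LinearMap.adjoint M zs), u' - us⟫ = ⟪zs, M us⟫ - ⟪zs, M u'⟫ := by
      rw [inner_neg_left, LinearMap.adjoint_inner_left, map_sub, inner_sub_right]
      ring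
    rw [e]; exact hfs u'
  have hsubgs : HasSubgrad g (-(LinearMap.adjoint C zs)) vs := by
    intro v'
    have e : ⟪-(LinearMap.adjoint C zs), v' - vs⟫ = ⟪zs, C vs⟫ - ⟪zs, C v'⟫ := by
      rw [inner_neg_left, LinearMap.adjoint_inner_left, map_sub, inner_sub_right]
      ring
    rw [e]; exact hgs v'
  have hMuseq : M us = d - C vs := by
    rw [← sub_eq_zero, show M us - (d - C vs) = M us + C vs - d by abel]
    exact hfeas
  have hmem : ((zs, d - C vs) : EuclideanSpace ℝ (Fin n) × EuclideanSpace ℝ (Fin n)) ∈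
      extSolSet f g M C d := by
    constructor
    · show HasSubgrad (hOne f M) (-(d - C vs)) zs
      rw [← hMuseq]
      exact hOne_subgrad f hf.1 M zs us rf hrf hsubfs
    · exact hTwo_subgrad g hg.1 C d zs vs rg hrg hsubgs
  -- Step C : quantities
  set c : ℝ := (1 - ρb)^2 * (τ/2)^2 with hc
  have hcpos : 0 < c := by
    rw [hc]
    have : 0 < 1 - ρb := by linarith
    positivity
  have hSpos : ∀ j, 1 ≤ j →
      0 < ‖M (u j) + C (v j) - d‖^2 + lam^2 * ‖w (j-1) - M (u j)‖^2 := by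
    intro j hj
    have h := hnz j hj
    have hn : ‖w (j-1) - M (u j)‖ = ‖M (u j) - w (j-1)‖ := norm_sub_rev _ _
    rcases (norm_nonneg (M (u j) + C (v j) - d)).eq_or_lt with h1 | h1
    · have h2 : 0 < ‖M (u j) - w (j-1)‖ := by
        rcases (norm_nonneg (M (u j) - w (j-1))).eq_or_lt with h2 | h2
        · exact absurd (by rw [← h1, ← h2]; ring) h
        · exact h2
      have h3 : 0 < lam^2 * ‖w (j-1) - M (u j)‖^2 := by rw [hn]; positivity
      nlinarith [sq_nonneg ‖M (u j) + C (v j) - d‖]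
    · positivity
  -- Step D : Fejér inequality
  have key : ∀ p : EuclideanSpace ℝ (Fin n) × EuclideanSpace ℝ (Fin n),
      p ∈ extSolSet f g M C d → ∀ j, 1 ≤ j →
      ‖z j - p.1‖^2 + ‖w j - p.2‖^2 +
        c * (‖M (u j) + C (v j) - d‖^2 + lam^2 * ‖w (j-1) - M (u j)‖^2) ≤
      ‖z (j-1) - p.1‖^2 + ‖w (j-1) - p.2‖^2 := by
    intro p hp j hj
    obtain ⟨hp1, hp2⟩ := hp
    obtain ⟨⟨rgj, hrgj⟩, hgsubj⟩ := hgsub j hj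
    obtain ⟨⟨rfj, hrfj⟩, hfsubj⟩ := hfsub j hj
    -- finiteness of hTwo/hOne at p.1
    have hhtwox := hTwo_val g hg.1 C d (x j) (v j) rgj hrgj hgsubj
    have hhoney := hOne_val f hf.1 M (y j) (u j) rfj hrfj hfsubj
    have hp1twobot : hTwo g C d p.1 ≠ ⊥ := hTwo_ne_bot g C d (v j) rgj hrgj p.1
    have hp1onebot : hOne f M p.1 ≠ ⊥ := hOne_ne_bot f M (u j) rfj hrfj p.1
    have hp1twotop : hTwo g C d p.1 ≠ ⊤ := ne_top_of_add_coe_le' hhtwox (hp2 (x j))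
    have hp1onetop : hOne f M p.1 ≠ ⊤ := ne_top_of_add_coe_le' hhoney (hp1 (y j))
    obtain ⟨r2, hr2⟩ : ∃ r : ℝ, hTwo g C d p.1 = (r : EReal) :=
      ⟨(hTwo g C d p.1).toReal, (EReal.coe_toReal hp1twotop hp1twobot).symm⟩
    obtain ⟨r1, hr1⟩ : ∃ r : ℝ, hOne f M p.1 = (r : EReal) :=
      ⟨(hOne f M p.1).toReal, (EReal.coe_toReal hp1onetop hp1onebot).symm⟩
    have hm1 : 0 ≤ ⟪(d - C (v j)) - p.2, x j - p.1⟫ :=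
      subgrad_mono (hTwo g C d) (d - C (v j)) (x j) p.2 p.1 _ r2 hhtwox hr2
        (hTwo_subgrad g hg.1 C d (x j) (v j) rgj hrgj hgsubj) hp2
    have hm2 : 0 ≤ ⟪(-(M (u j))) - (-p.2), y j - p.1⟫ :=
      subgrad_mono (hOne f M) (-(M (u j))) (y j) (-p.2) p.1 _ r1 hhoney hr1
        (hOne_subgrad f hf.1 M (y j) (u j) rfj hrfj hfsubj) hp1
    rw [hx j hj] at hm1
    rw [hy j hj, hx j hj] at hm2
    rw [hz j hj, hw j hj, hc]
    exact fejer_step (z (j-1)) (w (j-1)) (M (u j)) (C (v j)) d p.1 p.2 lam τ ρb (ρ j) (γ j)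
      hlam hτpos hτlam hτlam2 hρb0 (by linarith) (hρ j hj).1 (hρ j hj).2 (hSpos j hj)
      (hγ j hj) hm1 hm2
  -- Step E : telescoping
  have tele : ∀ p ∈ extSolSet f g M C d, ∀ K : ℕ,
      ‖z K - p.1‖^2 + ‖w K - p.2‖^2 +
        c * ∑ j ∈ Finset.Icc 1 K,
          (‖M (u j) + C (v j) - d‖^2 + lam^2 * ‖w (j-1) - M (u j)‖^2) ≤
      ‖z 0 - p.1‖^2 + ‖w 0 - p.2‖^2 := by
    intro p hp K
    induction K with
    | zero => simp
    | succ K ih =>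
      rw [Finset.sum_Icc_succ_top (by omega : 1 ≤ K + 1)]
      have hKK : K + 1 - 1 = K := by omega
      rw [hKK]
      have hstep := key p hp (K+1) (by omega)
      rw [hKK] at hstep
      have hdist : c * ((∑ j ∈ Finset.Icc 1 K,
          (‖M (u j) + C (v j) - d‖^2 + lam^2 * ‖w (j-1) - M (u j)‖^2)) +
          (‖M (u (K+1)) + C (v (K+1)) - d‖^2 + lam^2 * ‖w K - M (u (K+1))‖^2)) =
          c * (∑ j ∈ Finset.Icc 1 K,
          (‖M (u j) + C (v j) - d‖^2 + lam^2 * ‖w (j-1) - M (u j)‖^2)) +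
          c * (‖M (u (K+1)) + C (v (K+1)) - d‖^2 + lam^2 * ‖w K - M (u (K+1))‖^2) :=
        mul_add c _ _
      linarith [ih, hstep, hdist]
  -- Step F : minimizing index
  obtain ⟨i, hiIcc, himin⟩ := Finset.exists_min_image (Finset.Icc 1 k)
      (fun j => ‖M (u j) + C (v j) - d‖^2 + lam^2 * ‖w (j-1) - M (u j)‖^2)
      ⟨1, Finset.mem_Icc.mpr ⟨le_refl 1, hk⟩⟩
  obtain ⟨hi1, hik⟩ := Finset.mem_Icc.mp hiIcc
  have hsum_ge : (k : ℝ) * (‖M (u i) + C (v i) - d‖^2 + lam^2 * ‖w (i-1) - M (u i)‖^2) ≤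
      ∑ j ∈ Finset.Icc 1 k,
        (‖M (u j) + C (v j) - d‖^2 + lam^2 * ‖w (j-1) - M (u j)‖^2) := by
    have hcard : (Finset.Icc 1 k).card = k := by rw [Nat.card_Icc]; omega
    have h := Finset.card_nsmul_le_sum (Finset.Icc 1 k)
      (fun j => ‖M (u j) + C (v j) - d‖^2 + lam^2 * ‖w (j-1) - M (u j)‖^2)
      (‖M (u i) + C (v i) - d‖^2 + lam^2 * ‖w (i-1) - M (u i)‖^2)
      (fun j hj => himin j hj)
    rwa [hcard, nsmul_eq_mul] at h
  have hbound : ∀ p ∈ extSolSet f g M C d,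
      c * ((k:ℝ) * (‖M (u i) + C (v i) - d‖^2 + lam^2 * ‖w (i-1) - M (u i)‖^2)) ≤
        ‖z 0 - p.1‖^2 + ‖w 0 - p.2‖^2 := by
    intro p hp
    have h1 := tele p hp k
    have h2 := mul_le_mul_of_nonneg_left hsum_ge (le_of_lt hcpos)
    have h3 : (0:ℝ) ≤ ‖z k - p.1‖^2 + ‖w k - p.2‖^2 := by positivity
    linarith
  -- Step G : the two bounds
  have hq : ∀ q : ℝ, 0 ≤ q →
      q^2 ≤ ‖M (u i) + C (v i) - d‖^2 + lam^2 * ‖w (i-1) - M (u i)‖^2 →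
      q ≤ 2 * d0 / ((1 - ρb) * τ * Real.sqrt k) := by
    intro q hq0 hq2
    have hsk : (0:ℝ) < Real.sqrt k := Real.sqrt_pos.mpr (by
      have : (0:ℕ) < k := by omega
      exact_mod_cast this)
    have h1ρ : (0:ℝ) < 1 - ρb := by linarith
    have hden : 0 < (1 - ρb) * τ * Real.sqrt k := by positivity
    rw [le_div_iff₀ hden]
    have hL : ∀ D ∈ (fun p : EuclideanSpace ℝ (Fin n) × EuclideanSpace ℝ (Fin n) =>
        Real.sqrt (‖z 0 - p.1‖ ^ 2 + ‖w 0 - p.2‖ ^ 2)) '' extSolSet f g M C d,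
        q * ((1 - ρb) * τ * Real.sqrt k) / 2 ≤ D := by
      rintro D ⟨p, hp, rfl⟩
      have hE0 := hbound p hp
      have hsq : (q * ((1 - ρb) * τ * Real.sqrt k) / 2)^2 ≤
          ‖z 0 - p.1‖^2 + ‖w 0 - p.2‖^2 := by
        have hsk2 : (Real.sqrt k)^2 = (k:ℝ) := Real.sq_sqrt (Nat.cast_nonneg k)
        have he : (q * ((1 - ρb) * τ * Real.sqrt k) / 2)^2 = c * ((k:ℝ) * q^2) := by
          rw [hc, div_pow, mul_pow, mul_pow, mul_pow, hsk2]
          ring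
        rw [he]
        have h5 : c * ((k:ℝ) * q^2) ≤ c * ((k:ℝ) *
            (‖M (u i) + C (v i) - d‖^2 + lam^2 * ‖w (i-1) - M (u i)‖^2)) :=
          mul_le_mul_of_nonneg_left
            (mul_le_mul_of_nonneg_left hq2 (Nat.cast_nonneg k)) (le_of_lt hcpos)
        linarith
      calc q * ((1 - ρb) * τ * Real.sqrt k) / 2
          = Real.sqrt ((q * ((1 - ρb) * τ * Real.sqrt k) / 2)^2) :=
            (Real.sqrt_sq (by positivity)).symm
        _ ≤ Real.sqrt (‖z 0 - p.1‖ ^ 2 + ‖w 0 - p.2‖ ^ 2) := Real.sqrt_le_sqrt hsq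
    have hd0ge : q * ((1 - ρb) * τ * Real.sqrt k) / 2 ≤ d0 := by
      rw [hd0]
      exact le_csInf ⟨_, Set.mem_image_of_mem _ hmem⟩ hL
    linarith
  refine ⟨fun j hj hjk => ⟨(hgsub j hj).2, (hfsub j hj).2⟩, i, hi1, hik, ?_, ?_⟩
  · apply hq _ (norm_nonneg _)
    nlinarith [mul_nonneg (sq_nonneg lam) (sq_nonneg ‖w (i-1) - M (u i)‖)]
  · have hxy : x i - y i = lam • (w (i-1) - M (u i)) := by rw [hy i hi1]; abel
    rw [hxy, norm_smul, Real.norm_eq_abs, abs_of_pos hlam]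
    apply hq _ (by positivity)
    rw [mul_pow]
    nlinarith [sq_nonneg ‖M (u i) + C (v i) - d‖]
end
end

section
/- For every k ≥ 1 the ergodic quantities of the PMM satisfy ε̄_k^u ≥ 0, ε̄_k^v ≥ 0, and the ε-subdifferential inclusions 0 ∈ ∂_{ε̄_k^v} g(v̄_k) + C*x̄_k and 0 ∈ ∂_{ε̄_k^u} f(ū_k) + M*ȳ_k. -/
open scoped RealInnerProductSpace

noncomputable section

-- finiteness from minimality/subgrad
lemma phi_ne_top_of_subgrad {E : Type*} [NormedAddCommGroup E] [InnerProductSpace ℝ E]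
    {φ : E → EReal} {σ p v0 : E} (h : HasSubgrad φ σ p) (hv0 : φ v0 ≠ ⊤) : φ p ≠ ⊤ := by
  intro htop
  have := h v0
  rw [htop] at this
  simp [EReal.top_add_coe] at this
  exact hv0 this

lemma subgrad_real {E : Type*} [NormedAddCommGroup E] [InnerProductSpace ℝ E]
    {φ : E → EReal} {σ p : E} {A : ℝ} (h : HasSubgrad φ σ p) (hp : φ p = (A : EReal))
    {x' : E} {B : ℝ} (hx' : φ x' = (B : EReal)) : A + ⟪σ, x' - p⟫ ≤ B := by
  have := h x'
  rw [hp, hx'] at this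
  exact_mod_cast this

lemma hasSubgrad_of_min {E F : Type*} [NormedAddCommGroup E] [InnerProductSpace ℝ E]
    [FiniteDimensional ℝ E] [NormedAddCommGroup F] [InnerProductSpace ℝ F]
    [FiniteDimensional ℝ F]
    (φ : E → EReal) (hconv : ConvexE φ) (hbot : ∀ x, φ x ≠ ⊥) (v0 : E) (hv0 : φ v0 ≠ ⊤)
    (T : E →ₗ[ℝ] F) (d0 p : F) (lam : ℝ) (hlam : 0 < lam) (vh : E)
    (hmin : ∀ v', φ vh + ((⟪p, T vh - d0⟫ + lam / 2 * ‖T vh - d0‖ ^ 2 : ℝ) : EReal)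
      ≤ φ v' + ((⟪p, T v' - d0⟫ + lam / 2 * ‖T v' - d0‖ ^ 2 : ℝ) : EReal)) :
    HasSubgrad φ (-(LinearMap.adjoint T (p + lam • (T vh - d0)))) vh := by
  set Q : E → ℝ := fun v => ⟪p, T v - d0⟫ + lam / 2 * ‖T v - d0‖ ^ 2 with hQ
  set s : E := LinearMap.adjoint T (p + lam • (T vh - d0)) with hs
  -- quadratic expansion
  have hexp : ∀ (h : E) (t : ℝ), Q (vh + t • h)
      = Q vh + t * ⟪s, h⟫ + t ^ 2 * (lam / 2 * ‖T h‖ ^ 2) := by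
    intro h t
    have hT : T (vh + t • h) - d0 = (T vh - d0) + t • T h := by
      rw [map_add, map_smul]; abel
    have hip : ⟪s, h⟫ = ⟪p + lam • (T vh - d0), T h⟫ := LinearMap.adjoint_inner_left T _ _
    simp only [hQ, hT, hip, inner_add_right, inner_add_left, real_inner_smul_right,
      real_inner_smul_left, norm_add_sq_real, norm_smul, real_inner_self_eq_norm_sq]
    simp [Real.norm_eq_abs, mul_pow, sq_abs]
    ring
  -- phi vh finite
  have hvh_ne_top : φ vh ≠ ⊤ := by
    intro htop
    have := hmin v0
    rw [htop] at this
    have h2 : φ v0 + ((Q v0 : ℝ) : EReal) ≠ ⊤ := by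
      obtain ⟨B, hB⟩ : ∃ B : ℝ, φ v0 = (B : EReal) := ⟨(φ v0).toReal, (EReal.coe_toReal hv0 (hbot v0)).symm⟩
      rw [hB]; exact_mod_cast EReal.coe_ne_top _
    rw [EReal.top_add_of_ne_bot (by simp : ((Q vh : ℝ) : EReal) ≠ ⊥)] at this
    exact h2 (top_le_iff.mp this)
  obtain ⟨A, hA⟩ : ∃ A : ℝ, φ vh = (A : EReal) := ⟨(φ vh).toReal, (EReal.coe_toReal hvh_ne_top (hbot vh)).symm⟩
  intro x'
  rcases eq_or_ne (φ x') ⊤ with hx' | hx'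
  · rw [hx']; exact le_top
  obtain ⟨B, hB⟩ : ∃ B : ℝ, φ x' = (B : EReal) := ⟨(φ x').toReal, (EReal.coe_toReal hx' (hbot x')).symm⟩
  set h : E := x' - vh with hh
  have key : ∀ t : ℝ, 0 < t → t ≤ 1 → A ≤ B + ⟪s, h⟫ + t * (lam / 2 * ‖T h‖ ^ 2) := by
    intro t ht ht1
    set vt : E := vh + t • h with hvt
    have hcomb : vt = (1 - t) • vh + t • x' := by
      simp only [hvt, hh]; module
    have hconv' : φ vt ≤ (((1 - t) * A + t * B : ℝ) : EReal) := by
      rw [hcomb]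
      calc φ ((1-t) • vh + t • x') ≤ ((1-t : ℝ) : EReal) * φ vh + (t : EReal) * φ x' :=
            hconv vh x' (1-t) t (by linarith) ht.le (by ring)
        _ = (((1 - t) * A + t * B : ℝ) : EReal) := by rw [hA, hB]; norm_cast
    have hvtbot := hbot vt
    have hvt_ne_top : φ vt ≠ ⊤ := fun htp => by
      rw [htp] at hconv'; exact (EReal.coe_lt_top _).not_ge hconv'
    obtain ⟨Ct, hCt⟩ : ∃ Ct : ℝ, φ vt = (Ct : EReal) := ⟨(φ vt).toReal, (EReal.coe_toReal hvt_ne_top hvtbot).symm⟩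
    have hCtle : Ct ≤ (1 - t) * A + t * B := by rw [hCt] at hconv'; exact_mod_cast hconv'
    have hmin' := hmin vt
    rw [hA, hCt] at hmin'
    have hmin'' : A + Q vh ≤ Ct + Q vt := by exact_mod_cast hmin'
    have hQvt : Q vt = Q vh + t * ⟪s, h⟫ + t ^ 2 * (lam / 2 * ‖T h‖ ^ 2) := hexp h t
    rw [hQvt] at hmin''
    have h6 : t * A ≤ t * (B + ⟪s, h⟫ + t * (lam / 2 * ‖T h‖ ^ 2)) := by nlinarith [hmin'', hCtle]
    linarith [(mul_le_mul_iff_right₀ ht).mp h6]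
  have hfinal : A ≤ B + ⟪s, h⟫ := by
    have hc : (0:ℝ) ≤ lam / 2 * ‖T h‖ ^ 2 := by positivity
    set c := lam / 2 * ‖T h‖ ^ 2
    refine le_of_forall_pos_le_add ?_
    intro ε hε
    have ht : (0:ℝ) < min 1 (ε / (c + 1)) := lt_min one_pos (by positivity)
    have := key _ ht (min_le_left _ _)
    have h2 : min 1 (ε / (c+1)) * c ≤ ε := by
      have h3 : min 1 (ε / (c+1)) ≤ ε / (c+1) := min_le_right _ _
      have h4 : min 1 (ε / (c+1)) * c ≤ (ε / (c+1)) * c :=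
        mul_le_mul_of_nonneg_right h3 hc
      have h5 : (ε / (c+1)) * c ≤ ε := by
        rw [div_mul_eq_mul_div, div_le_iff₀ (by linarith)]
        nlinarith
      linarith
    linarith
  rw [hA, hB]
  have : ⟪-s, x' - vh⟫ = -⟪s, h⟫ := by rw [inner_neg_left]
  rw [this]
  have hfin2 : A + -⟪s, h⟫ ≤ B := by linarith
  exact_mod_cast hfin2


lemma jensenE {E : Type*} [NormedAddCommGroup E] [InnerProductSpace ℝ E]
    (φ : E → EReal) (hconv : ConvexE φ) (hbot : ∀ x, φ x ≠ ⊥)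
    (s : Finset ℕ) (a : ℕ → ℝ) (p : ℕ → E) (r : ℕ → ℝ)
    (ha : ∀ j ∈ s, 0 ≤ a j) (hsum : ∑ j ∈ s, a j = 1)
    (hr : ∀ j ∈ s, φ (p j) ≤ (r j : EReal)) :
    φ (∑ j ∈ s, a j • p j) ≤ ((∑ j ∈ s, a j * r j : ℝ) : EReal) := by
  induction s using Finset.induction_on generalizing a with
  | empty => simp at hsum
  | @insert i s hi ih =>
    have hai : 0 ≤ a i := ha i (Finset.mem_insert_self i s)
    have has : ∀ j ∈ s, 0 ≤ a j := fun j hj => ha j (Finset.mem_insert_of_mem hj)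
    rw [Finset.sum_insert hi] at hsum
    rw [Finset.sum_insert hi, Finset.sum_insert hi]
    set t : ℝ := ∑ j ∈ s, a j with htdef
    have ht0 : 0 ≤ t := Finset.sum_nonneg has
    rcases eq_or_lt_of_le ht0 with ht | ht
    · -- t = 0, all weights zero
      have hzero : ∀ j ∈ s, a j = 0 :=
        (Finset.sum_eq_zero_iff_of_nonneg has).mp ht.symm
      have hai1 : a i = 1 := by rw [← ht] at hsum; linarith
      have h1 : ∑ j ∈ s, a j • p j = 0 :=
        Finset.sum_eq_zero fun j hj => by rw [hzero j hj, zero_smul]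
      have h2 : ∑ j ∈ s, a j * r j = 0 :=
        Finset.sum_eq_zero fun j hj => by rw [hzero j hj, zero_mul]
      rw [h1, h2, hai1, one_smul, one_mul, add_zero, add_zero]
      exact hr i (Finset.mem_insert_self i s)
    · -- t > 0
      have ih' := ih (fun j => a j / t) (fun j hj => div_nonneg (has j hj) ht0)
        (by rw [← Finset.sum_div, ← htdef, div_self ht.ne'])

      set q : E := ∑ j ∈ s, (a j / t) • p j with hq
      have hcomb : a i • p i + ∑ j ∈ s, a j • p j = a i • p i + t • q := by
        congr 1
        rw [hq, Finset.smul_sum]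
        exact Finset.sum_congr rfl fun j hj => by
          rw [smul_smul, mul_div_cancel₀ _ ht.ne']
      have hqle : φ q ≤ ((∑ j ∈ s, (a j / t) * r j : ℝ) : EReal) :=
        ih' (fun j hj => hr j (Finset.mem_insert_of_mem hj))
      obtain ⟨A, hA⟩ : ∃ A : ℝ, φ (p i) = (A : EReal) := by
        refine ⟨(φ (p i)).toReal, (EReal.coe_toReal ?_ (hbot _)).symm⟩
        intro htp
        have := hr i (Finset.mem_insert_self i s); rw [htp] at this
        exact (EReal.coe_lt_top _).not_ge this
      obtain ⟨B, hB⟩ : ∃ B : ℝ, φ q = (B : EReal) := by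
        refine ⟨(φ q).toReal, (EReal.coe_toReal ?_ (hbot _)).symm⟩
        intro htp; rw [htp] at hqle
        exact (EReal.coe_lt_top _).not_ge hqle
      have hAle : A ≤ r i := by
        have := hr i (Finset.mem_insert_self i s); rw [hA] at this; exact_mod_cast this
      have hBle : B ≤ ∑ j ∈ s, (a j / t) * r j := by
        rw [hB] at hqle; exact_mod_cast hqle
      have hc := hconv (p i) q (a i) t hai ht0 hsum
      rw [hA, hB] at hc
      rw [hcomb]
      calc φ (a i • p i + t • q) ≤ (a i : EReal) * (A : EReal) + (t : EReal) * (B : EReal) := hc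
        _ = ((a i * A + t * B : ℝ) : EReal) := by norm_cast
        _ ≤ ((a i * r i + ∑ j ∈ s, a j * r j : ℝ) : EReal) := by
            have h3 : t * B ≤ t * ∑ j ∈ s, (a j / t) * r j :=
              mul_le_mul_of_nonneg_left hBle ht0
            have h4 : t * ∑ j ∈ s, (a j / t) * r j = ∑ j ∈ s, a j * r j := by
              rw [Finset.mul_sum]
              exact Finset.sum_congr rfl fun j hj => by
                field_simp
            have h5 : a i * A ≤ a i * r i := mul_le_mul_of_nonneg_left hAle hai
            have : a i * A + t * B ≤ a i * r i + ∑ j ∈ s, a j * r j := by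
              rw [← h4]; linarith
            exact_mod_cast this

lemma ergodic_esubgrad {E : Type*} [NormedAddCommGroup E] [InnerProductSpace ℝ E]
    (φ : E → EReal) (hconv : ConvexE φ) (hbot : ∀ x, φ x ≠ ⊥) (v0 : E) (hv0 : φ v0 ≠ ⊤)
    (k : ℕ) (a : ℕ → ℝ) (ha : ∀ j ∈ Finset.Icc 1 k, 0 ≤ a j)
    (Γ : ℝ) (hΓdef : Γ = ∑ j ∈ Finset.Icc 1 k, a j) (hΓ : 0 < Γ)
    (p σ : ℕ → E) (hsub : ∀ j ∈ Finset.Icc 1 k, HasSubgrad φ (σ j) (p j))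
    (pbar σbar : E) (hpbar : pbar = Γ⁻¹ • ∑ j ∈ Finset.Icc 1 k, a j • p j)
    (hσbar : σbar = Γ⁻¹ • ∑ j ∈ Finset.Icc 1 k, a j • σ j)
    (ε : ℝ) (hε : ε = Γ⁻¹ * ∑ j ∈ Finset.Icc 1 k, a j * ⟪p j - pbar, σ j⟫) :
    0 ≤ ε ∧ HasESubgrad φ ε σbar pbar := by
  set s := Finset.Icc 1 k with hsdef
  -- real values of φ at the p j
  set r : ℕ → ℝ := fun j => (φ (p j)).toReal with hrdef
  have hr : ∀ j ∈ s, φ (p j) = ((r j : ℝ) : EReal) := by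
    intro j hj
    exact (EReal.coe_toReal (phi_ne_top_of_subgrad (hsub j hj) hv0) (hbot _)).symm
  -- normalized weights
  have hsum1 : ∑ j ∈ s, a j / Γ = 1 := by
    rw [← Finset.sum_div, ← hΓdef, div_self hΓ.ne']
  have hpbar' : pbar = ∑ j ∈ s, (a j / Γ) • p j := by
    rw [hpbar, Finset.smul_sum]
    exact Finset.sum_congr rfl fun j hj => by rw [smul_smul, div_eq_inv_mul]
  -- Jensen
  set Rbar : ℝ := ∑ j ∈ s, (a j / Γ) * r j with hRbar
  have hjen : φ pbar ≤ (Rbar : EReal) := by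
    rw [hpbar']
    exact jensenE φ hconv hbot s (fun j => a j / Γ) p r
      (fun j hj => div_nonneg (ha j hj) hΓ.le) hsum1
      (fun j hj => le_of_eq (hr j hj))
  obtain ⟨P, hP⟩ : ∃ P : ℝ, φ pbar = (P : EReal) := by
    refine ⟨(φ pbar).toReal, (EReal.coe_toReal ?_ (hbot _)).symm⟩
    intro htp; rw [htp] at hjen; exact (EReal.coe_lt_top _).not_ge hjen
  have hPle : P ≤ Rbar := by rw [hP] at hjen; exact_mod_cast hjen
  -- lower bound on each inner product term
  have hterm : ∀ j ∈ s, r j - P ≤ ⟪p j - pbar, σ j⟫ := by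
    intro j hj
    have := subgrad_real (hsub j hj) (hr j hj) hP  -- wrong direction? fix below
    -- this : r j + ⟪σ j, pbar - p j⟫ ≤ P
    have hswap : ⟪σ j, pbar - p j⟫ = -⟪p j - pbar, σ j⟫ := by
      rw [real_inner_comm]
      rw [show pbar - p j = -(p j - pbar) by abel, inner_neg_left]
    rw [hswap] at this
    linarith
  -- ε ≥ 0
  have hsum_ar : ∑ j ∈ s, (a j / Γ) * r j = Γ⁻¹ * ∑ j ∈ s, a j * r j := by
    rw [Finset.mul_sum]
    exact Finset.sum_congr rfl fun j hj => by ring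
  have hε0 : 0 ≤ ε := by
    have h1 : ∑ j ∈ s, a j * (r j - P) ≤ ∑ j ∈ s, a j * ⟪p j - pbar, σ j⟫ :=
      Finset.sum_le_sum fun j hj => mul_le_mul_of_nonneg_left (hterm j hj) (ha j hj)
    have h2 : ∑ j ∈ s, a j * (r j - P) = (∑ j ∈ s, a j * r j) - Γ * P := by
      calc ∑ j ∈ s, a j * (r j - P) = ∑ j ∈ s, (a j * r j - a j * P) :=
            Finset.sum_congr rfl fun j _ => by ring
        _ = (∑ j ∈ s, a j * r j) - (∑ j ∈ s, a j) * P := by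
            rw [Finset.sum_sub_distrib, Finset.sum_mul]
        _ = (∑ j ∈ s, a j * r j) - Γ * P := by rw [← hΓdef]
    have h3 : Γ * Rbar = ∑ j ∈ s, a j * r j := by
      rw [hRbar, hsum_ar, ← mul_assoc, mul_inv_cancel₀ hΓ.ne', one_mul]
    have h4 : 0 ≤ ∑ j ∈ s, a j * ⟪p j - pbar, σ j⟫ := by
      nlinarith
    rw [hε]
    positivity
  refine ⟨hε0, ?_⟩
  -- the ε-subgradient inequality
  intro x'
  rcases eq_or_ne (φ x') ⊤ with hx' | hx'
  · rw [hx']; exact le_top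
  obtain ⟨B, hB⟩ : ∃ B : ℝ, φ x' = (B : EReal) := ⟨(φ x').toReal, (EReal.coe_toReal hx' (hbot x')).symm⟩
  rw [hP, hB]
  -- inner product identity
  have hibar : ∀ y : E, ⟪σbar, y⟫ = Γ⁻¹ * ∑ j ∈ s, a j * ⟪σ j, y⟫ := by
    intro y
    rw [hσbar, real_inner_smul_left, sum_inner]
    congr 1
    exact Finset.sum_congr rfl fun j hj => real_inner_smul_left _ _ _
  have hkey : ⟪σbar, x' - pbar⟫ - ε = Γ⁻¹ * ∑ j ∈ s, a j * ⟪σ j, x' - p j⟫ := by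
    rw [hibar, hε, ← mul_sub, ← Finset.sum_sub_distrib]
    congr 1
    refine Finset.sum_congr rfl fun j hj => ?_
    have h5 : (⟪p j - pbar, σ j⟫ : ℝ) = ⟪σ j, p j - pbar⟫ := real_inner_comm _ _
    rw [h5, ← mul_sub, ← inner_sub_right]
    congr 2
    abel
  -- per-term subgradient inequalities summed
  have hsumineq : Rbar + Γ⁻¹ * ∑ j ∈ s, a j * ⟪σ j, x' - p j⟫ ≤ B := by
    have h1 : ∀ j ∈ s, r j + ⟪σ j, x' - p j⟫ ≤ B := fun j hj =>
      subgrad_real (hsub j hj) (hr j hj) hB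
    have h2 : ∑ j ∈ s, (a j / Γ) * (r j + ⟪σ j, x' - p j⟫) ≤ ∑ j ∈ s, (a j / Γ) * B :=
      Finset.sum_le_sum fun j hj =>
        mul_le_mul_of_nonneg_left (h1 j hj) (div_nonneg (ha j hj) hΓ.le)
    have h3 : ∑ j ∈ s, (a j / Γ) * B = B := by
      rw [← Finset.sum_mul, hsum1, one_mul]
    have h4 : ∑ j ∈ s, (a j / Γ) * (r j + ⟪σ j, x' - p j⟫)
        = Rbar + Γ⁻¹ * ∑ j ∈ s, a j * ⟪σ j, x' - p j⟫ := by
      rw [hRbar, Finset.mul_sum, ← Finset.sum_add_distrib]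
      exact Finset.sum_congr rfl fun j hj => by ring
    rw [h4, h3] at h2
    exact h2
  have hfinal : P + ⟪σbar, x' - pbar⟫ - ε ≤ B := by
    have := hkey
    linarith [hsumineq, hPle]
  have : ((P : EReal) + ((⟪σbar, x' - pbar⟫ : ℝ) : EReal) - (ε : EReal)) = ((P + ⟪σbar, x' - pbar⟫ - ε : ℝ) : EReal) := by
    norm_cast
  rw [this]
  exact_mod_cast hfinal



/-- the ergodic quantities of the PMM satisfy the nonnegativity of the
error terms and the ε-subdifferential inclusions. -/
theorem pmm_ergodic_inclusions
    (m1 m2 n : ℕ)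
    (f : EuclideanSpace ℝ (Fin m1) → EReal) (g : EuclideanSpace ℝ (Fin m2) → EReal)
    (hf : IsPCC f) (hg : IsPCC g)
    (M : EuclideanSpace ℝ (Fin m1) →ₗ[ℝ] EuclideanSpace ℝ (Fin n))
    (C : EuclideanSpace ℝ (Fin m2) →ₗ[ℝ] EuclideanSpace ℝ (Fin n))
    (d : EuclideanSpace ℝ (Fin n))
    (lam : ℝ) (hlam : 0 < lam) (ρb : ℝ) (hρb : ρb ∈ Set.Ico (0 : ℝ) 1)
    (u : ℕ → EuclideanSpace ℝ (Fin m1)) (v : ℕ → EuclideanSpace ℝ (Fin m2))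
    (z w x y : ℕ → EuclideanSpace ℝ (Fin n)) (γ ρ : ℕ → ℝ)
    (hv : ∀ k, 1 ≤ k → ∀ v' : EuclideanSpace ℝ (Fin m2),
      g (v k) + ((⟪z (k-1) + lam • w (k-1), C (v k) - d⟫ +
          lam / 2 * ‖C (v k) - d‖ ^ 2 : ℝ) : EReal) ≤
        g v' + ((⟪z (k-1) + lam • w (k-1), C v' - d⟫ +
          lam / 2 * ‖C v' - d‖ ^ 2 : ℝ) : EReal))
    (hu : ∀ k, 1 ≤ k → ∀ u' : EuclideanSpace ℝ (Fin m1),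
      f (u k) + ((⟪z (k-1) + lam • (C (v k) - d), M (u k)⟫ +
          lam / 2 * ‖M (u k)‖ ^ 2 : ℝ) : EReal) ≤
        f u' + ((⟪z (k-1) + lam • (C (v k) - d), M u'⟫ +
          lam / 2 * ‖M u'‖ ^ 2 : ℝ) : EReal))
    (hx : ∀ k, 1 ≤ k → x k = z (k-1) + lam • w (k-1) + lam • (C (v k) - d))
    (hy : ∀ k, 1 ≤ k → y k = x k - lam • (w (k-1) - M (u k)))
    (hnz : ∀ k, 1 ≤ k → ‖M (u k) + C (v k) - d‖ + ‖M (u k) - w (k-1)‖ ≠ 0)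
    (hγ : ∀ k, 1 ≤ k → γ k = (lam * ‖C (v k) - d + w (k-1)‖ ^ 2 +
        lam * ⟪d - C (v k) - M (u k), w (k-1) - M (u k)⟫) /
      (‖M (u k) + C (v k) - d‖ ^ 2 + lam ^ 2 * ‖M (u k) - w (k-1)‖ ^ 2))
    (hρ : ∀ k, 1 ≤ k → ρ k ∈ Set.Icc (1 - ρb) (1 + ρb))
    (hz : ∀ k, 1 ≤ k → z k = z (k-1) + (ρ k * γ k) • (M (u k) + C (v k) - d))
    (hw : ∀ k, 1 ≤ k → w k = w (k-1) - (ρ k * γ k * lam) • (w (k-1) - M (u k)))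
    (Γ : ℕ → ℝ) (hΓ : ∀ k, Γ k = ∑ j ∈ Finset.Icc 1 k, ρ j * γ j)
    (ubar : ℕ → EuclideanSpace ℝ (Fin m1))
    (hubar : ∀ k, ubar k = (Γ k)⁻¹ • ∑ j ∈ Finset.Icc 1 k, (ρ j * γ j) • u j)
    (vbar : ℕ → EuclideanSpace ℝ (Fin m2))
    (hvbar : ∀ k, vbar k = (Γ k)⁻¹ • ∑ j ∈ Finset.Icc 1 k, (ρ j * γ j) • v j)
    (xbar ybar : ℕ → EuclideanSpace ℝ (Fin n))
    (hxbar : ∀ k, xbar k = (Γ k)⁻¹ • ∑ j ∈ Finset.Icc 1 k, (ρ j * γ j) • x j)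
    (hybar : ∀ k, ybar k = (Γ k)⁻¹ • ∑ j ∈ Finset.Icc 1 k, (ρ j * γ j) • y j)
    (εu εv : ℕ → ℝ)
    (hεu : ∀ k, εu k = (Γ k)⁻¹ * ∑ j ∈ Finset.Icc 1 k,
      ρ j * γ j * ⟪u j - ubar k, -(LinearMap.adjoint M (y j))⟫)
    (hεv : ∀ k, εv k = (Γ k)⁻¹ * ∑ j ∈ Finset.Icc 1 k,
      ρ j * γ j * ⟪v j - vbar k, -(LinearMap.adjoint C (x j))⟫)
    (hΓpos : ∀ k, 1 ≤ k → 0 < Γ k)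
    (k : ℕ) (hk : 1 ≤ k) :
    0 ≤ εu k ∧ 0 ≤ εv k ∧
    HasESubgrad g (εv k) (-(LinearMap.adjoint C (xbar k))) (vbar k) ∧
    HasESubgrad f (εu k) (-(LinearMap.adjoint M (ybar k))) (ubar k) := by


  have hρb1 : ρb < 1 := hρb.2
  have hρb0 : 0 ≤ ρb := hρb.1
  set s := Finset.Icc 1 k with hsdef
  set a : ℕ → ℝ := fun j => ρ j * γ j with hadef
  -- nonnegativity of weights
  have haj : ∀ j ∈ s, 0 ≤ a j := by
    intro j hj
    have hj1 : 1 ≤ j := (Finset.mem_Icc.mp hj).1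
    have hρj := hρ j hj1
    have hρpos : 0 < ρ j := lt_of_lt_of_le (by linarith) hρj.1
    have hγj : 0 ≤ γ j := by
      rw [hγ j hj1]
      apply div_nonneg
      · set X := M (u j) + C (v j) - d with hX
        set Y := w (j - 1) - M (u j) with hY
        have e1 : C (v j) - d + w (j - 1) = X + Y := by rw [hX, hY]; abel
        have e2 : d - C (v j) - M (u j) = -X := by rw [hX]; abel
        rw [e1, e2]
        rw [norm_add_sq_real, inner_neg_left]
        have hip : |(⟪X, Y⟫ : ℝ)| ≤ ‖X‖ * ‖Y‖ := abs_real_inner_le_norm X Y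
        have h1 := abs_le.mp hip
        nlinarith [sq_nonneg (‖X‖ - ‖Y‖), hlam.le]
      · positivity
    exact mul_nonneg hρpos.le hγj
  obtain ⟨v0, hv0⟩ := hg.2.1
  obtain ⟨u0, hu0⟩ := hf.2.1
  -- exact subgradients at each iterate
  have hsubv : ∀ j ∈ s, HasSubgrad g (-(LinearMap.adjoint C (x j))) (v j) := by
    intro j hj
    have hj1 : 1 ≤ j := (Finset.mem_Icc.mp hj).1
    have hmain := hasSubgrad_of_min g hg.2.2.2 hg.1 v0 hv0 C d
      (z (j - 1) + lam • w (j - 1)) lam hlam (v j) (hv j hj1)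
    have hxj : x j = z (j - 1) + lam • w (j - 1) + lam • (C (v j) - d) := hx j hj1
    rw [hxj]
    exact hmain
  have hsubu : ∀ j ∈ s, HasSubgrad f (-(LinearMap.adjoint M (y j))) (u j) := by
    intro j hj
    have hj1 : 1 ≤ j := (Finset.mem_Icc.mp hj).1
    have hmain := hasSubgrad_of_min f hf.2.2.2 hf.1 u0 hu0 M 0
      (z (j - 1) + lam • (C (v j) - d)) lam hlam (u j)
      (fun u' => by simpa using hu j hj1 u')
    have hyj : y j = z (j - 1) + lam • (C (v j) - d) + lam • (M (u j) - 0) := by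
      rw [hy j hj1, hx j hj1]; module
    rw [hyj]
    exact hmain
  -- averaged subgradients
  have hσbarv : -(LinearMap.adjoint C (xbar k))
      = (Γ k)⁻¹ • ∑ j ∈ s, a j • (-(LinearMap.adjoint C (x j))) := by
    rw [hxbar k, map_smul, map_sum, ← smul_neg]
    congr 1
    rw [← Finset.sum_neg_distrib]
    exact Finset.sum_congr rfl fun j _ => by rw [map_smul, smul_neg]
  have hσbaru : -(LinearMap.adjoint M (ybar k))
      = (Γ k)⁻¹ • ∑ j ∈ s, a j • (-(LinearMap.adjoint M (y j))) := by
    rw [hybar k, map_smul, map_sum, ← smul_neg]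
    congr 1
    rw [← Finset.sum_neg_distrib]
    exact Finset.sum_congr rfl fun j _ => by rw [map_smul, smul_neg]
  obtain ⟨hεv0, hEv⟩ := ergodic_esubgrad g hg.2.2.2 hg.1 v0 hv0 k a haj (Γ k)
    (hΓ k) (hΓpos k hk) v (fun j => -(LinearMap.adjoint C (x j))) hsubv
    (vbar k) (-(LinearMap.adjoint C (xbar k))) (hvbar k) hσbarv (εv k) (hεv k)
  obtain ⟨hεu0, hEu⟩ := ergodic_esubgrad f hf.2.2.2 hf.1 u0 hu0 k a haj (Γ k)
    (hΓ k) (hΓpos k hk) u (fun j => -(LinearMap.adjoint M (y j))) hsubu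
    (ubar k) (-(LinearMap.adjoint M (ybar k))) (hubar k) hσbaru (εu k) (hεu k)
  exact ⟨hεu0, hεv0, hEv, hEu⟩
end
end

section
/- For every k ≥ 1 and every (z,w) ∈ ℝ^n×ℝ^n, the PMM sequences satisfy −Σ_{j=1}^k ρ_jγ_j φ_j(z,w) ≤ (1/2)‖(z,w)−(z_0,w_0)‖², where φ_j(z,w) = ⟨z−x_j, b_j−w⟩ + ⟨z−y_j, a_j+w⟩. -/
open scoped RealInnerProductSpace

noncomputable section

lemma expandφ {E : Type*} [NormedAddCommGroup E] [InnerProductSpace ℝ E]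
    (zp wp zz ww mu cv dd : E) (lam : ℝ) :
    ⟪zz - (zp + lam • wp + lam • (cv - dd)), (dd - cv) - ww⟫ +
      ⟪zz - ((zp + lam • wp + lam • (cv - dd)) - lam • (wp - mu)), (-mu) + ww⟫ =
    (lam * ‖cv - dd + wp‖ ^ 2 + lam * ⟪dd - cv - mu, wp - mu⟫)
      - ⟪zz - zp, mu + cv - dd⟫ + lam * ⟪ww - wp, wp - mu⟫ := by
  simp only [← real_inner_self_eq_norm_sq, inner_sub_left, inner_sub_right,
    inner_add_left, inner_add_right, real_inner_smul_left, real_inner_smul_right,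
    inner_neg_left, inner_neg_right]
  ring_nf
  linear_combination lam * (real_inner_comm ww wp) - lam * (real_inner_comm ww mu)
    - lam * (real_inner_comm mu wp)

lemma stepIneq {E : Type*} [NormedAddCommGroup E] [InnerProductSpace ℝ E]
    (s t zp wp zz ww : E) (lam γ ρ φ : ℝ)
    (hφ : φ = γ * (‖s‖ ^ 2 + lam ^ 2 * ‖t‖ ^ 2) - ⟪zz - zp, s⟫ + lam * ⟪ww - wp, t⟫)
    (hρ0 : 0 ≤ ρ) (hρ2 : ρ ≤ 2) :
    -(ρ * γ * φ) ≤ 1 / 2 * (‖zz - zp‖ ^ 2 + ‖ww - wp‖ ^ 2)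
      - 1 / 2 * (‖zz - (zp + (ρ * γ) • s)‖ ^ 2 + ‖ww - (wp - (ρ * γ * lam) • t)‖ ^ 2) := by
  have e1 : zz - (zp + (ρ * γ) • s) = (zz - zp) - (ρ * γ) • s := by abel
  have e2 : ww - (wp - (ρ * γ * lam) • t) = (ww - wp) + (ρ * γ * lam) • t := by abel
  have n1 : ‖zz - zp - (ρ * γ) • s‖ ^ 2
      = ‖zz - zp‖ ^ 2 - 2 * ((ρ * γ) * ⟪zz - zp, s⟫) + (ρ * γ) ^ 2 * ‖s‖ ^ 2 := by
    rw [norm_sub_sq_real]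
    simp [real_inner_smul_right, norm_smul, mul_pow, sq_abs]
  have n2 : ‖ww - wp + (ρ * γ * lam) • t‖ ^ 2
      = ‖ww - wp‖ ^ 2 + 2 * ((ρ * γ * lam) * ⟪ww - wp, t⟫) + (ρ * γ * lam) ^ 2 * ‖t‖ ^ 2 := by
    rw [norm_add_sq_real]
    simp [real_inner_smul_right, norm_smul, mul_pow, sq_abs]
  rw [e1, e2, n1, n2]
  have key : 0 ≤ ρ * (2 - ρ) * (γ ^ 2 * (‖s‖ ^ 2 + lam ^ 2 * ‖t‖ ^ 2)) :=
    mul_nonneg (mul_nonneg hρ0 (by linarith)) (by positivity)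
  subst hφ; linarith [key]

/-- for every k ≥ 1 and every (z, w),
-Σ_{j=1}^k ρ_j γ_j φ_j(z, w) ≤ (1/2)‖(z, w) - (z₀, w₀)‖², where
φ_j(z, w) = ⟪z - x_j, b_j - w⟫ + ⟪z - y_j, a_j + w⟫. -/
theorem pmm_affine_sum_bound
    (m1 m2 n : ℕ)
    (f : EuclideanSpace ℝ (Fin m1) → EReal) (g : EuclideanSpace ℝ (Fin m2) → EReal)
    (hf : IsPCC f) (hg : IsPCC g)
    (M : EuclideanSpace ℝ (Fin m1) →ₗ[ℝ] EuclideanSpace ℝ (Fin n))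
    (C : EuclideanSpace ℝ (Fin m2) →ₗ[ℝ] EuclideanSpace ℝ (Fin n))
    (d : EuclideanSpace ℝ (Fin n))
    (lam : ℝ) (hlam : 0 < lam) (ρb : ℝ) (hρb : ρb ∈ Set.Ico (0 : ℝ) 1)
    (u : ℕ → EuclideanSpace ℝ (Fin m1)) (v : ℕ → EuclideanSpace ℝ (Fin m2))
    (z w x y : ℕ → EuclideanSpace ℝ (Fin n)) (γ ρ : ℕ → ℝ)
    (hv : ∀ k, 1 ≤ k → ∀ v' : EuclideanSpace ℝ (Fin m2),
      g (v k) + ((⟪z (k-1) + lam • w (k-1), C (v k) - d⟫ +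
          lam / 2 * ‖C (v k) - d‖ ^ 2 : ℝ) : EReal) ≤
        g v' + ((⟪z (k-1) + lam • w (k-1), C v' - d⟫ +
          lam / 2 * ‖C v' - d‖ ^ 2 : ℝ) : EReal))
    (hu : ∀ k, 1 ≤ k → ∀ u' : EuclideanSpace ℝ (Fin m1),
      f (u k) + ((⟪z (k-1) + lam • (C (v k) - d), M (u k)⟫ +
          lam / 2 * ‖M (u k)‖ ^ 2 : ℝ) : EReal) ≤
        f u' + ((⟪z (k-1) + lam • (C (v k) - d), M u'⟫ +
          lam / 2 * ‖M u'‖ ^ 2 : ℝ) : EReal))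
    (hx : ∀ k, 1 ≤ k → x k = z (k-1) + lam • w (k-1) + lam • (C (v k) - d))
    (hy : ∀ k, 1 ≤ k → y k = x k - lam • (w (k-1) - M (u k)))
    (hnz : ∀ k, 1 ≤ k → ‖M (u k) + C (v k) - d‖ + ‖M (u k) - w (k-1)‖ ≠ 0)
    (hγ : ∀ k, 1 ≤ k → γ k = (lam * ‖C (v k) - d + w (k-1)‖ ^ 2 +
        lam * ⟪d - C (v k) - M (u k), w (k-1) - M (u k)⟫) /
      (‖M (u k) + C (v k) - d‖ ^ 2 + lam ^ 2 * ‖M (u k) - w (k-1)‖ ^ 2))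
    (hρ : ∀ k, 1 ≤ k → ρ k ∈ Set.Icc (1 - ρb) (1 + ρb))
    (hz : ∀ k, 1 ≤ k → z k = z (k-1) + (ρ k * γ k) • (M (u k) + C (v k) - d))
    (hw : ∀ k, 1 ≤ k → w k = w (k-1) - (ρ k * γ k * lam) • (w (k-1) - M (u k)))
    (k : ℕ) (hk : 1 ≤ k)
    (zz ww : EuclideanSpace ℝ (Fin n)) :
    -∑ j ∈ Finset.Icc 1 k, ρ j * γ j *
        (⟪zz - x j, (d - C (v j)) - ww⟫ + ⟪zz - y j, (-(M (u j))) + ww⟫) ≤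
      1 / 2 * (‖zz - z 0‖ ^ 2 + ‖ww - w 0‖ ^ 2) := by

  have step : ∀ j, 1 ≤ j →
      -(ρ j * γ j * (⟪zz - x j, (d - C (v j)) - ww⟫ + ⟪zz - y j, (-(M (u j))) + ww⟫)) ≤
        1 / 2 * (‖zz - z (j-1)‖ ^ 2 + ‖ww - w (j-1)‖ ^ 2)
          - 1 / 2 * (‖zz - z j‖ ^ 2 + ‖ww - w j‖ ^ 2) := by
    intro j hj
    have hρj := hρ j hj
    have hρ0 : 0 ≤ ρ j := by have := hρb.2; have := hρj.1; linarith
    have hρ2 : ρ j ≤ 2 := by have := hρb.2; have := hρj.2; linarith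
    have hsum : 0 < ‖M (u j) + C (v j) - d‖ + ‖M (u j) - w (j-1)‖ :=
      lt_of_le_of_ne (by positivity) (Ne.symm (hnz j hj))
    have hDpos : 0 < ‖M (u j) + C (v j) - d‖ ^ 2 + lam ^ 2 * ‖M (u j) - w (j-1)‖ ^ 2 := by
      rcases lt_or_ge 0 ‖M (u j) + C (v j) - d‖ with h | h
      · nlinarith [pow_pos h 2, sq_nonneg (lam * ‖M (u j) - w (j-1)‖)]
      · have h0 : ‖M (u j) + C (v j) - d‖ = 0 := le_antisymm h (norm_nonneg _)
        have ht : 0 < ‖M (u j) - w (j-1)‖ := by rw [h0] at hsum; linarith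
        nlinarith [mul_pos (pow_pos hlam 2) (pow_pos ht 2), sq_nonneg ‖M (u j) + C (v j) - d‖]
    have hγD : γ j * (‖M (u j) + C (v j) - d‖ ^ 2 + lam ^ 2 * ‖M (u j) - w (j-1)‖ ^ 2)
        = lam * ‖C (v j) - d + w (j-1)‖ ^ 2 +
          lam * ⟪d - C (v j) - M (u j), w (j-1) - M (u j)⟫ := by
      rw [hγ j hj]
      exact div_mul_cancel₀ _ (ne_of_gt hDpos)
    have hφeq : (⟪zz - x j, (d - C (v j)) - ww⟫ + ⟪zz - y j, (-(M (u j))) + ww⟫)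
        = γ j * (‖M (u j) + C (v j) - d‖ ^ 2 + lam ^ 2 * ‖w (j-1) - M (u j)‖ ^ 2)
          - ⟪zz - z (j-1), M (u j) + C (v j) - d⟫
          + lam * ⟪ww - w (j-1), w (j-1) - M (u j)⟫ := by
      rw [hy j hj, hx j hj, expandφ]
      rw [show ‖w (j-1) - M (u j)‖ = ‖M (u j) - w (j-1)‖ from norm_sub_rev _ _, hγD]
    rw [hz j hj, hw j hj]
    exact stepIneq _ _ _ _ _ _ _ _ _ _ hφeq hρ0 hρ2
  have main : ∀ m : ℕ, -∑ j ∈ Finset.Icc 1 m, ρ j * γ j *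
        (⟪zz - x j, (d - C (v j)) - ww⟫ + ⟪zz - y j, (-(M (u j))) + ww⟫) ≤
      1 / 2 * (‖zz - z 0‖ ^ 2 + ‖ww - w 0‖ ^ 2)
        - 1 / 2 * (‖zz - z m‖ ^ 2 + ‖ww - w m‖ ^ 2) := by
    intro m
    induction m with
    | zero => simp
    | succ p ih =>
      rw [Finset.sum_Icc_succ_top (Nat.le_add_left 1 p)]
      have hs := step (p + 1) (Nat.le_add_left 1 p)
      simp only [Nat.add_sub_cancel] at hs
      linarith
  have hnn : 0 ≤ ‖zz - z k‖ ^ 2 + ‖ww - w k‖ ^ 2 := by positivity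
  linarith [main k]
end
end
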